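/- Let K be a number field with finite extensions L and F such that L/K is tame abelian with Galois group G, and suppose L and F are arithmetically disjoint over K (i.e., O_{LF} = O_L ⊗_{O_K} O_F). If O_L is free over O_K[G], then O_{LF} is free over O_F[G], where Gal(LF/F) is identified with G. -/

import Mathlib

open NumberField

/-- Tame extension of number fields. -/
def IsTameExt (K L : Type*) [Field K] [Field L] [NumberField K] [NumberField L]
    [Algebra K L] : Prop :=
  ∀ P : Ideal (𝓞 L), P.IsMaximal →
    ¬ (ringChar ((𝓞 L) ⧸ P) ∣
        Ideal.ramificationIdx'
          (P.comap (algebraMap (𝓞 K) (𝓞 L))) P)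

/-- Normal integral basis. -/
def HasNIB (K L : Type*) [Field K] [Field L] [NumberField K] [NumberField L]
    [Algebra K L] [FiniteDimensional K L] : Prop :=
  ∃ α : 𝓞 L, ∀ x : 𝓞 L, ∃! c : (L ≃ₐ[K] L) → 𝓞 K,
    (x : L) = ∑ g : L ≃ₐ[K] L, algebraMap K L (c g : K) * g (α : L)

open Polynomial in
/-- The compositum of a Galois extension with another extension is Galois over the latter. -/
theorem isGalois_of_compositum (K L F E : Type*) [Field K] [Field L] [Field F] [Field E]
    [NumberField K] [NumberField L] [NumberField F] [NumberField E]
    [Algebra K L] [Algebra K F] [Algebra K E] [Algebra L E] [Algebra F E]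
    [IsScalarTower K L E] [IsScalarTower K F E]
    [FiniteDimensional K L] [FiniteDimensional F E] [FiniteDimensional K E]
    [IsGalois K L]
    (hcomp : IntermediateField.adjoin K
        (Set.range (algebraMap L E) ∪ Set.range (algebraMap F E)) = ⊤) :
    IsGalois F E := by
  obtain ⟨p, -, hp⟩ := IsGalois.is_separable_splitting_field K L
  haveI := hp
  have hsplitsE : (p.map (algebraMap K E)).Splits := by
    rw [IsScalarTower.algebraMap_eq K L E, ← Polynomial.map_map]
    exact (IsSplittingField.splits L p).map _
  have hroots : (algebraMap L E) '' (p.rootSet L) = p.rootSet E :=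
    (IsSplittingField.splits L p).image_rootSet (IsScalarTower.toAlgHom K L E)
  have halgF : ∀ x : E, IsAlgebraic F x := fun x => (IsIntegral.of_finite F x).isAlgebraic
  have hIF : IntermediateField.adjoin F (p.rootSet E) = ⊤ := by
    rw [eq_top_iff]
    rintro x -
    have hx : x ∈ IntermediateField.adjoin K
        (Set.range (algebraMap L E) ∪ Set.range (algebraMap F E)) := by
      rw [hcomp]; trivial
    have hle : IntermediateField.adjoin K
        (Set.range (algebraMap L E) ∪ Set.range (algebraMap F E)) ≤
        (IntermediateField.adjoin F (p.rootSet E)).restrictScalars K := by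
      rw [IntermediateField.adjoin_le_iff]
      rintro z (⟨y, rfl⟩ | ⟨f, rfl⟩)
      · show algebraMap L E y ∈ IntermediateField.adjoin F (p.rootSet E)
        have hy : y ∈ Algebra.adjoin K (p.rootSet L) := by
          rw [IsSplittingField.adjoin_rootSet L p]; trivial
        induction hy using Algebra.adjoin_induction with
        | mem z hz =>
          exact IntermediateField.subset_adjoin _ _ (hroots ▸ Set.mem_image_of_mem _ hz)
        | algebraMap r =>
          rw [← IsScalarTower.algebraMap_apply, IsScalarTower.algebraMap_apply K F E]
          exact IntermediateField.algebraMap_mem _ _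
        | add u v hu hv ihu ihv => rw [map_add]; exact add_mem ihu ihv
        | mul u v hu hv ihu ihv => rw [map_mul]; exact mul_mem ihu ihv
      · show algebraMap F E f ∈ IntermediateField.adjoin F (p.rootSet E)
        exact IntermediateField.algebraMap_mem _ _
    exact hle hx
  have hq : (p.map (algebraMap K F)).IsSplittingField F E := by
    constructor
    · rw [Polynomial.map_map, ← IsScalarTower.algebraMap_eq]
      exact hsplitsE
    · have hrs : (p.map (algebraMap K F)).rootSet E = p.rootSet E := by
        rw [Polynomial.rootSet, Polynomial.aroots, Polynomial.map_map,
          ← IsScalarTower.algebraMap_eq, Polynomial.rootSet, Polynomial.aroots]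
      rw [hrs, ← IntermediateField.adjoin_toSubalgebra_of_isAlgebraic (fun x _ => halgF x), hIF,
        IntermediateField.top_toSubalgebra]
  haveI := hq
  haveI : Normal F E := Normal.of_isSplittingField (p.map (algebraMap K F))
  exact ⟨⟩

/-- if L/K is tame abelian, F/K is a further extension, E = LF is
the compositum, and L and F are arithmetically disjoint over K
(O_E = O_L ⊗_{O_K} O_F, expressed as: E is the compositum, [E:F] = [L:K] and
O_E is spanned over O_F by the image of O_L), then a normal integral basis for
L/K gives one for E/F. -/
theorem stmt_2 (K L F E : Type*) [Field K] [Field L] [Field F] [Field E]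
    [NumberField K] [NumberField L] [NumberField F] [NumberField E]
    [Algebra K L] [Algebra K F] [Algebra K E] [Algebra L E] [Algebra F E]
    [IsScalarTower K L E] [IsScalarTower K F E]
    [FiniteDimensional K L] [FiniteDimensional F E] [FiniteDimensional K E]
    [IsGalois K L]
    (habel : ∀ σ τ : L ≃ₐ[K] L, σ * τ = τ * σ)
    (htame : IsTameExt K L)
    -- E = L·F :
    (hcomp : IntermediateField.adjoin K
        (Set.range (algebraMap L E) ∪ Set.range (algebraMap F E)) = ⊤)
    -- linear disjointness :
    (hdim : Module.finrank F E = Module.finrank K L)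
    -- O_E = O_L ⊗_{O_K} O_F :
    (hdisj : ∀ x : 𝓞 E, x ∈ Submodule.span (𝓞 F)
        (Set.range (algebraMap (𝓞 L) (𝓞 E))))
    (hNIB : HasNIB K L) :
    HasNIB F E := by
  classical
  obtain ⟨α, hα⟩ := hNIB
  haveI : IsGalois F E := isGalois_of_compositum K L F E hcomp
  -- The restriction map from Gal(E/F) to Gal(L/K)
  set r : (E ≃ₐ[F] E) → (L ≃ₐ[K] L) := fun g => (g.restrictScalars K).restrictNormal L with hr
  have hcommutes : ∀ (g : E ≃ₐ[F] E) (y : L),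
      algebraMap L E (r g y) = g (algebraMap L E y) := fun g y =>
    AlgEquiv.restrictNormal_commutes (g.restrictScalars K) L y
  have hAtop : Algebra.adjoin K (Set.range (algebraMap L E) ∪ Set.range (algebraMap F E)) = ⊤ := by
    have h := IntermediateField.adjoin_toSubalgebra_of_isAlgebraic (F := K) (E := E)
      (S := Set.range (algebraMap L E) ∪ Set.range (algebraMap F E))
      (fun x _ => (IsIntegral.of_finite K x).isAlgebraic)
    rw [hcomp, IntermediateField.top_toSubalgebra] at h
    exact h.symm
  have hr_inj : Function.Injective r := by
    intro g1 g2 h12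
    apply AlgEquiv.ext
    intro x
    have hx : x ∈ Algebra.adjoin K
        (Set.range (algebraMap L E) ∪ Set.range (algebraMap F E)) := by
      rw [hAtop]; trivial
    induction hx using Algebra.adjoin_induction with
    | mem z hz =>
      rcases hz with ⟨y, rfl⟩ | ⟨f, rfl⟩
      · rw [← hcommutes g1 y, ← hcommutes g2 y, h12]
      · rw [AlgEquiv.commutes, AlgEquiv.commutes]
    | algebraMap rr =>
      rw [IsScalarTower.algebraMap_apply K F E, AlgEquiv.commutes, AlgEquiv.commutes]
    | add u v hu hv ihu ihv => rw [map_add, map_add, ihu, ihv]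
    | mul u v hu hv ihu ihv => rw [map_mul, map_mul, ihu, ihv]
  have hr_bij : Function.Bijective r := by
    rw [Fintype.bijective_iff_injective_and_card]
    refine ⟨hr_inj, ?_⟩
    rw [← Nat.card_eq_fintype_card, ← Nat.card_eq_fintype_card, IsGalois.card_aut_eq_finrank,
      IsGalois.card_aut_eq_finrank, hdim]
  set e : (E ≃ₐ[F] E) ≃ (L ≃ₐ[K] L) := Equiv.ofBijective r hr_bij with he
  -- the candidate basis vectors
  set b : (L ≃ₐ[K] L) → E := fun g => algebraMap L E (g (α : L)) with hb
  have hrep : ∀ x : 𝓞 E, ∃ c : (L ≃ₐ[K] L) → 𝓞 F,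
      (x : E) = ∑ g : L ≃ₐ[K] L, algebraMap F E (c g : F) * b g := by
    intro x
    refine Submodule.span_induction ?_ ?_ ?_ ?_ (hdisj x)
    · rintro _ ⟨y, rfl⟩
      obtain ⟨c, hc, -⟩ := hα y
      refine ⟨fun g => algebraMap (𝓞 K) (𝓞 F) (c g), ?_⟩
      have h1 : ((algebraMap (𝓞 L) (𝓞 E) y : 𝓞 E) : E) = algebraMap L E (y : L) := rfl
      rw [h1, hc, map_sum]
      refine Finset.sum_congr rfl fun g _ => ?_
      rw [map_mul]
      congr 1
      have h2 : ((algebraMap (𝓞 K) (𝓞 F) (c g) : 𝓞 F) : F) = algebraMap K F (c g : K) := rfl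
      rw [h2, ← IsScalarTower.algebraMap_apply K L E, ← IsScalarTower.algebraMap_apply K F E]
    · exact ⟨0, by simp⟩
    · rintro u v _ _ ⟨cu, hcu⟩ ⟨cv, hcv⟩
      refine ⟨cu + cv, ?_⟩
      have : ((u + v : 𝓞 E) : E) = (u : E) + (v : E) := by push_cast; ring
      rw [this, hcu, hcv, ← Finset.sum_add_distrib]
      exact Finset.sum_congr rfl fun g _ => by
        rw [Pi.add_apply]; push_cast; ring
    · rintro a u _ ⟨c, hc⟩
      refine ⟨fun g => a * c g, ?_⟩
      have h3 : ((a • u : 𝓞 E) : E) = algebraMap F E (a : F) * (u : E) := by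
        rw [Algebra.smul_def]
        push_cast
        rfl
      rw [h3, hc, Finset.mul_sum]
      refine Finset.sum_congr rfl fun g _ => ?_
      have h4 : ((a * c g : 𝓞 F) : F) = (a : F) * (c g : F) := by push_cast; ring
      rw [h4, map_mul, mul_assoc]
  have hspan : ⊤ ≤ Submodule.span F (Set.range b) := by
    rintro z -
    have hzalg : IsAlgebraic ℤ z :=
      (IsFractionRing.isAlgebraic_iff ℤ ℚ E).mpr (IsIntegral.of_finite ℚ z).isAlgebraic
    obtain ⟨x, y, hy, hxy⟩ : ∃ x : 𝓞 E, ∃ y ≠ (0 : ℤ), algebraMap ℤ E y * z = (x : E) := by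
      obtain ⟨y, hy, hint⟩ := hzalg.exists_integral_multiple
      exact ⟨⟨y • z, hint⟩, y, hy, (Algebra.smul_def y z).symm⟩
    let x' : 𝓞 E := x
    have hxy' : (algebraMap ℤ E) y * z = (x' : E) := hxy
    have hmem : ((x' : E)) ∈ Submodule.span F (Set.range b) := by
      obtain ⟨c, hc⟩ := hrep x'
      rw [hc]
      refine Submodule.sum_mem _ fun g _ => ?_
      rw [← Algebra.smul_def]
      exact Submodule.smul_mem _ _ (Submodule.subset_span ⟨g, rfl⟩)
    have hz : z = ((y : F)⁻¹) • ((x' : E)) := by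
      rw [← hxy']
      have h5 : algebraMap ℤ E y = algebraMap F E (y : F) := by
        simp [map_intCast]
      rw [h5, ← Algebra.smul_def, smul_smul, inv_mul_cancel₀ (by exact_mod_cast hy), one_smul]
    rw [hz]
    exact Submodule.smul_mem _ _ hmem
  have hb_li : LinearIndependent F b :=
    linearIndependent_of_top_le_span_of_card_eq_finrank hspan
      (by rw [← Nat.card_eq_fintype_card, IsGalois.card_aut_eq_finrank, hdim])
  -- assembly
  refine ⟨algebraMap (𝓞 L) (𝓞 E) α, fun x => ?_⟩
  have hαE : ((algebraMap (𝓞 L) (𝓞 E) α : 𝓞 E) : E) = algebraMap L E (α : L) := rfl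
  have hb_r : ∀ g' : E ≃ₐ[F] E, g' ((algebraMap (𝓞 L) (𝓞 E) α : 𝓞 E) : E) = b (r g') := by
    intro g'
    rw [hαE, ← hcommutes g' α]
  obtain ⟨c, hc⟩ := hrep x
  have key : ∀ c' : (E ≃ₐ[F] E) → 𝓞 F,
      (∑ g' : E ≃ₐ[F] E, algebraMap F E (c' g' : F) *
          g' ((algebraMap (𝓞 L) (𝓞 E) α : 𝓞 E) : E)) =
        ∑ g : L ≃ₐ[K] L, (c' (e.symm g) : F) • b g := by
    intro c'
    rw [← Equiv.sum_comp e.symm (fun g' => algebraMap F E (c' g' : F) *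
          g' ((algebraMap (𝓞 L) (𝓞 E) α : 𝓞 E) : E))]
    refine Finset.sum_congr rfl fun g _ => ?_
    rw [hb_r (e.symm g), Algebra.smul_def]
    congr 1
    show b (e (e.symm g)) = b g
    rw [Equiv.apply_symm_apply]
  refine ⟨fun g' => c (r g'), ?_, ?_⟩
  · show (x : E) = _
    rw [key (fun g' => c (r g')), hc]
    refine Finset.sum_congr rfl fun g _ => ?_
    have : r (e.symm g) = g := e.apply_symm_apply g
    rw [this, Algebra.smul_def]
  · intro c' hc'
    have hsum : ∑ g : L ≃ₐ[K] L,
        ((c' (e.symm g) : F) - (c (r (e.symm g)) : F)) • b g = 0 := by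
      have h1 : (x : E) = ∑ g : L ≃ₐ[K] L, (c' (e.symm g) : F) • b g := by
        rw [hc']; exact key c'
      have h2 : (x : E) = ∑ g : L ≃ₐ[K] L, (c (r (e.symm g)) : F) • b g := by
        rw [hc]
        refine Finset.sum_congr rfl fun g _ => ?_
        have : r (e.symm g) = g := e.apply_symm_apply g
        rw [this, Algebra.smul_def]
      rw [Finset.sum_congr rfl fun g _ => sub_smul _ _ (b g), Finset.sum_sub_distrib,
        ← h1, ← h2, sub_self]
    have hall := Fintype.linearIndependent_iff.mp hb_li
      (fun g => (c' (e.symm g) : F) - (c (r (e.symm g)) : F)) hsum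
    funext g'
    apply NumberField.RingOfIntegers.ext
    have := hall (e g')
    simp only [Equiv.symm_apply_apply] at this
    exact sub_eq_zero.mp this
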